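/- Let f : {1,…,k}^n → ℝ ∪ {+∞} be a function and let f̃ : S_k^n → ℝ ∪ {+∞} be a k-submodular relaxation of f, i.e., f̃ is k-submodular and f̃(x) = f(x) for all x ∈ {1,…,k}^n ⊆ S_k^n. Then for every minimizer x ∈ S_k^n of f̃ there exists a minimizer y ∈ {1,…,k}^n of f such that for every index i with x_i ≠ 0 one has y_i = x_i. -/

import Mathlib

/-- The partial order on `S_k = {0,1,…,k}`: `a ⪯ b` iff `a = 0` or `a = b`. -/
def pre {k : ℕ} (a b : Fin (k + 1)) : Prop := a = 0 ∨ a = b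

instance {k : ℕ} (a b : Fin (k + 1)) : Decidable (pre a b) :=
  decidable_of_iff (a = 0 ∨ a = b) Iff.rfl

/-- The componentwise order `⪯` on `S_k^n`. -/
def preV {k n : ℕ} (x y : Fin n → Fin (k + 1)) : Prop := ∀ i, pre (x i) (y i)

/-- The operation `⊓` on `S_k^n`. -/
def sqcap {k n : ℕ} (x y : Fin n → Fin (k + 1)) : Fin n → Fin (k + 1) :=
  fun i => if pre (x i) (y i) ∨ pre (y i) (x i) then min (x i) (y i) else 0

/-- The operation `⊔` on `S_k^n`. -/
def sqcup {k n : ℕ} (x y : Fin n → Fin (k + 1)) : Fin n → Fin (k + 1) :=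
  fun i => if pre (x i) (y i) ∨ pre (y i) (x i) then max (x i) (y i) else 0

/-- A `(⊓,⊔)`-closed subset of `S_k^n`. -/
def closedSet {k n : ℕ} (M : Set (Fin n → Fin (k + 1))) : Prop :=
  M.Nonempty ∧ ∀ x ∈ M, ∀ y ∈ M, sqcap x y ∈ M ∧ sqcup x y ∈ M

lemma sqcup_sqcup {k n : ℕ} (x z : Fin n → Fin (k + 1)) (hz : ∀ i, z i ≠ 0) (i : Fin n) :
    sqcup x (sqcup x z) i = if x i = 0 then z i else x i := by
  simp only [sqcup, pre]
  by_cases h0 : x i = 0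
  · simp [h0]
  · by_cases heq : x i = z i
    · simp [h0, heq]
    · have hz' : ¬ (z i = 0 ∨ z i = x i) := by
        rintro (h | h)
        · exact hz i h
        · exact heq h.symm
      simp only [h0, heq, false_or, hz', if_false, or_false]
      have : ¬ ((0 : Fin (k+1)) = x i) := fun h => h0 h.symm
      simp [h0, this, max_eq_left (Fin.zero_le (x i))]

/-- Persistency: if `f̃` is a `k`-submodular relaxation of `f` (agreeing with `f`
on points with all coordinates nonzero), then every minimizer `x` of `f̃` can be
extended to a minimizer `y` of `f` over `{1,…,k}^n` with `y i = x i` whenever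
`x i ≠ 0`. -/
theorem persistency (k n : ℕ) (hk : 0 < k) (hn : 0 < n)
    (f ftilde : (Fin n → Fin (k + 1)) → WithTop ℝ)
    (hsub : ∀ x y, ftilde (sqcap x y) + ftilde (sqcup x y) ≤ ftilde x + ftilde y)
    (hrelax : ∀ x : Fin n → Fin (k + 1), (∀ i, x i ≠ 0) → ftilde x = f x)
    (x : Fin n → Fin (k + 1)) (hx : ∀ y, ftilde x ≤ ftilde y) :
    ∃ y : Fin n → Fin (k + 1), (∀ i, y i ≠ 0) ∧
      (∀ z, (∀ i, z i ≠ 0) → f y ≤ f z) ∧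
      (∀ i, x i ≠ 0 → y i = x i) := by
  classical
  -- the set of all-nonzero points
  set D : Finset (Fin n → Fin (k + 1)) := Finset.univ.filter (fun z => ∀ i, z i ≠ 0) with hD
  have hone : (fun _ : Fin n => (1 : Fin (k + 1))) ∈ D := by
    have h1 : (1 : Fin (k + 1)) ≠ 0 := by
      have : (1 : ℕ) < k + 1 := Nat.succ_lt_succ hk
      simp [Fin.ext_iff, Nat.mod_eq_of_lt this]
    simp [hD, h1]
  obtain ⟨z₀, hz₀D, hz₀min⟩ := D.exists_min_image f ⟨_, hone⟩
  have hz₀ : ∀ i, z₀ i ≠ 0 := by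
    simpa [hD] using hz₀D
  set y := sqcup x (sqcup x z₀) with hy
  have hyi : ∀ i, y i = if x i = 0 then z₀ i else x i := sqcup_sqcup x z₀ hz₀
  have hyne : ∀ i, y i ≠ 0 := by
    intro i
    rw [hyi i]
    by_cases h : x i = 0
    · simpa [h] using hz₀ i
    · simpa [h]
  have hle : ftilde y ≤ ftilde z₀ := by
    by_cases htop : ftilde x = ⊤
    · have hall : ∀ w, ftilde w = ⊤ := fun w => top_le_iff.mp (htop ▸ hx w)
      simp [hall]
    · have step : ∀ w, ftilde (sqcup x w) ≤ ftilde w := by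
        intro w
        have h1 := hsub x w
        have h2 := hx (sqcap x w)
        have h3 : ftilde x + ftilde (sqcup x w) ≤ ftilde x + ftilde w :=
          le_trans (add_le_add_left h2 _) h1
        exact (WithTop.add_le_add_iff_left htop).mp h3
      exact le_trans (step (sqcup x z₀)) (step z₀)
  refine ⟨y, hyne, ?_, ?_⟩
  · intro z hz
    have hzD : z ∈ D := by simp [hD, hz]
    calc f y = ftilde y := (hrelax y hyne).symm
      _ ≤ ftilde z₀ := hle
      _ = f z₀ := hrelax z₀ hz₀
      _ ≤ f z := hz₀min z hzD
  · intro i hxi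
    rw [hyi i, if_neg hxi]
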